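/- Let p be an odd prime, a a quadratic non-residue mod p, and f(x) = x_1² − a x_2² − p x_3² + a p x_4². Then for Re(α) > 0, ∫_{‖x‖_p > 1} |f(x)|_p^{−α−2} d⁴x = p^{−2α}(1 − p^{−2})(1 + p^{α})/(1 − p^{−2α}). -/

import Mathlib

open MeasureTheory Complex Classical Filter

variable (p : ℕ) [Fact p.Prime]

noncomputable instance : MeasurableSpace ℚ_[p] := borel _
instance : BorelSpace ℚ_[p] := ⟨rfl⟩
noncomputable instance (n : ℕ) : MeasurableSpace (Fin n → ℚ_[p]) := borel _
instance (n : ℕ) : BorelSpace (Fin n → ℚ_[p]) := ⟨rfl⟩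

/-- Haar measure on `ℚ_p` normalized so that `ℤ_p` (the closed unit ball) has measure 1. -/
noncomputable def haarQ : Measure ℚ_[p] :=
  Measure.addHaarMeasure ⟨⟨Metric.closedBall 0 1, isCompact_closedBall 0 1⟩,
    ⟨0, mem_interior_iff_mem_nhds.2 (Metric.closedBall_mem_nhds 0 one_pos)⟩⟩

/-- Haar measure on `ℚ_p^n` normalized so that `ℤ_p^n` has measure 1. -/
noncomputable def haarQn (n : ℕ) : Measure (Fin n → ℚ_[p]) :=
  Measure.addHaarMeasure ⟨⟨Metric.closedBall 0 1, isCompact_closedBall 0 1⟩,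
    ⟨0, mem_interior_iff_mem_nhds.2 (Metric.closedBall_mem_nhds 0 one_pos)⟩⟩

/-- The p-adic fractional part of `x` : the unique rational of the form `z / p^n`
lying in `[0,1)` with `x - r ∈ ℤ_p`. -/
noncomputable def padicFract (x : ℚ_[p]) : ℚ :=
  if h : ∃ r : ℚ, (∃ (z : ℤ) (n : ℕ), r = (z : ℚ) / (p : ℚ) ^ n) ∧ 0 ≤ r ∧ r < 1 ∧
      ‖x - (r : ℚ_[p])‖ ≤ 1 then h.choose else 0

/-- The standard additive character `χ(y) = exp(2 π i {y}_p)` of `ℚ_p`. -/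
noncomputable def stdChar (y : ℚ_[p]) : ℂ :=
  Complex.exp (2 * Real.pi * Complex.I * (padicFract p y : ℂ))

/-- A Bruhat–Schwartz (test) function: locally constant with compact support. -/
def IsBruhatSchwartz {E : Type*} [TopologicalSpace E] (φ : E → ℂ) : Prop :=
  IsLocallyConstant φ ∧ HasCompactSupport φ

/-- Fourier transform on `ℚ_p`. -/
noncomputable def fourier1 (φ : ℚ_[p] → ℂ) (ξ : ℚ_[p]) : ℂ :=
  ∫ x, stdChar p (-(ξ * x)) * φ x ∂haarQ p

/-- Fourier transform on `ℚ_p^n`. -/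
noncomputable def fourierN (n : ℕ) (φ : (Fin n → ℚ_[p]) → ℂ) (ξ : Fin n → ℚ_[p]) : ℂ :=
  ∫ x, stdChar p (-(∑ i, ξ i * x i)) * φ x ∂haarQn p n

/-- Inverse Fourier transform on `ℚ_p^n`. -/
noncomputable def fourierInvN (n : ℕ) (φ : (Fin n → ℚ_[p]) → ℂ) (x : Fin n → ℚ_[p]) : ℂ :=
  ∫ ξ, stdChar p (∑ i, x i * ξ i) * φ ξ ∂haarQn p n

/-- The elliptic quadratic form `f(x) = x₁² - a x₂² - p x₃² + a p x₄²`. -/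
noncomputable def Qf (a : ℤ) (x : Fin 4 → ℚ_[p]) : ℚ_[p] :=
  x 0 ^ 2 - (a : ℚ_[p]) * x 1 ^ 2 - (p : ℚ_[p]) * x 2 ^ 2 + (a : ℚ_[p]) * (p : ℚ_[p]) * x 3 ^ 2

/-- The dual elliptic quadratic form `f°(x) = a p x₁² - p x₂² - a x₃² + x₄²`. -/
noncomputable def QfCirc (a : ℤ) (x : Fin 4 → ℚ_[p]) : ℚ_[p] :=
  (a : ℚ_[p]) * (p : ℚ_[p]) * x 0 ^ 2 - (p : ℚ_[p]) * x 1 ^ 2 - (a : ℚ_[p]) * x 2 ^ 2 + x 3 ^ 2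


open Pointwise ENNReal

instance : (haarQn p 4).IsAddHaarMeasure := Measure.isAddHaarMeasure_addHaarMeasure _

def cell (k : Fin 4 → ℤ) : Set (Fin 4 → ℚ_[p]) := {x | ∀ i, ‖x i‖ ≤ (p:ℝ) ^ (k i)}

variable {p}

lemma hp1R : (1:ℝ) < p := by exact_mod_cast (Fact.out : p.Prime).one_lt
lemma hp0R : (0:ℝ) < p := lt_trans one_pos hp1R

lemma isClosed_cell (k : Fin 4 → ℤ) : IsClosed (cell p k) := by
  have : cell p k = ⋂ i, {x : Fin 4 → ℚ_[p] | ‖x i‖ ≤ (p:ℝ) ^ (k i)} := by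
    ext x; simp [cell]
  rw [this]
  exact isClosed_iInter fun i =>
    isClosed_le (Continuous.norm (continuous_apply i)) continuous_const

lemma measurableSet_cell (k : Fin 4 → ℤ) : MeasurableSet (cell p k) :=
  (isClosed_cell k).measurableSet

lemma cell_mono {k k' : Fin 4 → ℤ} (h : ∀ i, k i ≤ k' i) : cell p k ⊆ cell p k' :=
  fun x hx i => (hx i).trans (zpow_le_zpow_right₀ hp1R.le (h i))

lemma isCompact_cell (k : Fin 4 → ℤ) : IsCompact (cell p k) := by
  set M : ℤ := Finset.univ.sup' ⟨0, Finset.mem_univ _⟩ k with hM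
  refine IsCompact.of_isClosed_subset
    (isCompact_closedBall (0 : Fin 4 → ℚ_[p]) ((p:ℝ) ^ M)) (isClosed_cell k) ?_
  intro x hx
  simp only [Metric.mem_closedBall, dist_zero_right]
  rw [pi_norm_le_iff_of_nonneg (by positivity)]
  intro i
  exact (hx i).trans (zpow_le_zpow_right₀ hp1R.le (Finset.le_sup' k (Finset.mem_univ i)))

lemma vol_cell_lt_top (k : Fin 4 → ℤ) : haarQn p 4 (cell p k) < ⊤ :=
  (isCompact_cell k).measure_lt_top
lemma exists_res (κ : ℤ) (y : ℚ_[p]) (hy : ‖y‖ ≤ (p:ℝ) ^ (κ+1)) :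
    ∃ j : Fin p, ‖y - (j:ℚ_[p]) * (p:ℚ_[p]) ^ (-(κ+1))‖ ≤ (p:ℝ) ^ κ := by
  have hpQ : (p:ℚ_[p]) ≠ 0 := by
    exact_mod_cast Nat.cast_ne_zero.2 (Fact.out : p.Prime).ne_zero
  have hu : ‖y * (p:ℚ_[p]) ^ (κ+1)‖ ≤ 1 := by
    rw [norm_mul, Padic.norm_p_zpow]
    calc ‖y‖ * (p:ℝ) ^ (-(κ+1)) ≤ (p:ℝ) ^ (κ+1) * (p:ℝ) ^ (-(κ+1)) := by
          apply mul_le_mul_of_nonneg_right hy (by positivity)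
      _ = 1 := by rw [← zpow_add₀ hp0R.ne', show κ+1 + -(κ+1) = 0 by ring, zpow_zero]
  set z : ℤ_[p] := ⟨y * (p:ℚ_[p]) ^ (κ+1), hu⟩ with hz
  have hlt : z.appr 1 < p := by simpa using z.appr_lt 1
  refine ⟨⟨z.appr 1, hlt⟩, ?_⟩
  have h1 : ‖z - ((z.appr 1 : ℕ) : ℤ_[p])‖ ≤ (p:ℝ) ^ (-(1:ℕ):ℤ) := by
    rw [PadicInt.norm_le_pow_iff_mem_span_pow]
    simpa using PadicInt.appr_spec 1 z
  have h2 : ‖y * (p:ℚ_[p]) ^ (κ+1) - ((z.appr 1 : ℕ) : ℚ_[p])‖ ≤ (p:ℝ)⁻¹ := by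
    have : ((z - ((z.appr 1 : ℕ) : ℤ_[p]) : ℤ_[p]) : ℚ_[p])
        = y * (p:ℚ_[p]) ^ (κ+1) - ((z.appr 1 : ℕ) : ℚ_[p]) := by
      rfl
    have h3 : ‖((z - ((z.appr 1 : ℕ) : ℤ_[p]) : ℤ_[p]) : ℚ_[p])‖ ≤ (p:ℝ)^(-(1:ℕ):ℤ) := h1
    rw [this] at h3
    simpa using h3
  have key : y - ((z.appr 1 : ℕ) : ℚ_[p]) * (p:ℚ_[p]) ^ (-(κ+1))
      = (y * (p:ℚ_[p]) ^ (κ+1) - ((z.appr 1 : ℕ) : ℚ_[p])) * (p:ℚ_[p]) ^ (-(κ+1)) := by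
    rw [sub_mul, mul_assoc, ← zpow_add₀ hpQ, show κ+1 + -(κ+1) = 0 by ring, zpow_zero, mul_one]
  rw [show (((⟨z.appr 1, hlt⟩ : Fin p) : ℚ_[p])) = ((z.appr 1 : ℕ) : ℚ_[p]) by norm_cast]
  rw [key, norm_mul, Padic.norm_p_zpow]
  calc _ ≤ (p:ℝ)⁻¹ * (p:ℝ) ^ (-(-(κ+1))) :=
        mul_le_mul_of_nonneg_right h2 (by positivity)
    _ = (p:ℝ) ^ κ := by
        rw [show (p:ℝ)⁻¹ = (p:ℝ) ^ (-1:ℤ) by simp, ← zpow_add₀ hp0R.ne']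
        norm_num

lemma res_disjoint (κ : ℤ) (y : ℚ_[p]) {j j' : Fin p}
    (h : ‖y - (j:ℚ_[p]) * (p:ℚ_[p]) ^ (-(κ+1))‖ ≤ (p:ℝ) ^ κ)
    (h' : ‖y - (j':ℚ_[p]) * (p:ℚ_[p]) ^ (-(κ+1))‖ ≤ (p:ℝ) ^ κ) : j = j' := by
  by_contra hne
  have hd : ‖((j':ℚ_[p]) - (j:ℚ_[p])) * (p:ℚ_[p]) ^ (-(κ+1))‖ ≤ (p:ℝ) ^ κ := by
    have e : ((j':ℚ_[p]) - (j:ℚ_[p])) * (p:ℚ_[p]) ^ (-(κ+1))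
        = (y - (j:ℚ_[p]) * (p:ℚ_[p]) ^ (-(κ+1)))
          + -(y - (j':ℚ_[p]) * (p:ℚ_[p]) ^ (-(κ+1))) := by ring
    rw [e]
    exact le_trans (Padic.nonarchimedean _ _) (by rw [norm_neg]; exact max_le h h')
  have hnorm1 : ‖(j':ℚ_[p]) - (j:ℚ_[p])‖ = 1 := by
    have ecast : ((j':ℚ_[p]) - (j:ℚ_[p])) = ((((j':ℕ):ℤ) - ((j:ℕ):ℤ) : ℤ) : ℚ_[p]) := by
      push_cast; ring
    rw [ecast]
    have hdvd : ¬ ((p:ℤ) ∣ (((j':ℕ):ℤ) - ((j:ℕ):ℤ))) := by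
      intro hdv
      have : ((((j':ℕ):ℤ) - ((j:ℕ):ℤ) : ℤ) : ZMod p) = 0 :=
        (ZMod.intCast_zmod_eq_zero_iff_dvd _ p).2 hdv
      push_cast at this
      have : ((j':ℕ) : ZMod p) = ((j:ℕ) : ZMod p) := by linear_combination this
      have hv : (j':ℕ) = (j:ℕ) := by
        have := congrArg ZMod.val this
        rwa [ZMod.val_cast_of_lt j'.2, ZMod.val_cast_of_lt j.2] at this
      exact hne (Fin.ext hv).symm
    have hle : ‖((((j':ℕ):ℤ) - ((j:ℕ):ℤ) : ℤ) : ℚ_[p])‖ ≤ 1 := Padic.norm_int_le_one _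
    rcases lt_or_eq_of_le hle with hlt | heq
    · exact absurd ((Padic.norm_intCast_lt_one_iff (k := _)).1 hlt) hdvd
    · exact heq
  rw [norm_mul, hnorm1, one_mul, Padic.norm_p_zpow, neg_neg] at hd
  have : (κ+1 : ℤ) ≤ κ := by
    have h1 : (1:ℝ) < p := hp1R
    exact (zpow_le_zpow_iff_right₀ h1).mp hd
  omega

lemma cell_succ_eq (k : Fin 4 → ℤ) (i : Fin 4) :
    cell p (Function.update k i (k i + 1)) =
      ⋃ j : Fin p, ((fun t => if t = i then (j:ℚ_[p]) * (p:ℚ_[p]) ^ (-(k i + 1)) else 0) +ᵥ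
        cell p k) := by
  ext x
  simp only [Set.mem_iUnion, Set.mem_vadd_set_iff_neg_vadd_mem, vadd_eq_add, cell,
    Set.mem_setOf_eq, Pi.add_apply, Pi.neg_apply]
  constructor
  · intro hx
    obtain ⟨j, hj⟩ := exists_res (k i) (x i)
      (by simpa [Function.update_self] using hx i)
    refine ⟨j, fun t => ?_⟩
    by_cases ht : t = i
    · subst ht
      simpa [neg_add_eq_sub, ← sub_eq_neg_add] using hj
    · have := hx t
      rw [Function.update_of_ne ht] at this
      simpa [ht] using this
  · rintro ⟨j, hj⟩ t
    by_cases ht : t = i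
    · subst ht
      have h1 := hj t
      simp only [if_pos rfl] at h1
      rw [Function.update_self]
      have hxt : x t = (x t - (j:ℚ_[p]) * (p:ℚ_[p]) ^ (-(k t + 1)))
          + (j:ℚ_[p]) * (p:ℚ_[p]) ^ (-(k t + 1)) := by ring
      rw [hxt]
      refine le_trans (Padic.nonarchimedean _ _) (max_le ?_ ?_)
      · refine le_trans ?_ (zpow_le_zpow_right₀ hp1R.le (by omega : k t ≤ k t + 1))
        simpa [neg_add_eq_sub, ← sub_eq_neg_add] using h1
      · rw [norm_mul, Padic.norm_p_zpow, neg_neg]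
        have hj1 : ‖((j:ℕ) : ℚ_[p])‖ ≤ 1 := by
          have := Padic.norm_int_le_one (p := p) ((j:ℕ):ℤ)
          simpa using this
        calc ‖((j:ℕ):ℚ_[p])‖ * (p:ℝ) ^ (k t + 1) ≤ 1 * (p:ℝ) ^ (k t + 1) :=
              mul_le_mul_of_nonneg_right hj1 (by positivity)
          _ = (p:ℝ) ^ (k t + 1) := one_mul _
    · have h1 := hj t
      simp only [if_neg ht] at h1
      rw [Function.update_of_ne ht]
      simpa using h1

lemma vol_succ (k : Fin 4 → ℤ) (i : Fin 4) :
    haarQn p 4 (cell p (Function.update k i (k i + 1))) = p * haarQn p 4 (cell p k) := by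
  rw [cell_succ_eq k i]
  have hdisj : Pairwise (Function.onFun Disjoint fun j : Fin p =>
      ((fun t => if t = i then (j:ℚ_[p]) * (p:ℚ_[p]) ^ (-(k i + 1)) else 0) +ᵥ cell p k)) := by
    intro j j' hne
    rw [Function.onFun, Set.disjoint_left]
    intro x hx hx'
    rw [Set.mem_vadd_set_iff_neg_vadd_mem] at hx hx'
    have h1 := hx i
    have h2 := hx' i
    simp only [vadd_eq_add, Pi.add_apply, Pi.neg_apply, if_pos rfl] at h1 h2
    have h1' : ‖x i - (j:ℚ_[p]) * (p:ℚ_[p]) ^ (-(k i + 1))‖ ≤ (p:ℝ) ^ (k i) := by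
      simpa [neg_add_eq_sub, ← sub_eq_neg_add] using h1
    have h2' : ‖x i - (j':ℚ_[p]) * (p:ℚ_[p]) ^ (-(k i + 1))‖ ≤ (p:ℝ) ^ (k i) := by
      simpa [neg_add_eq_sub, ← sub_eq_neg_add] using h2
    exact hne (res_disjoint (k i) (x i) h1' h2')
  rw [measure_iUnion hdisj (fun j => (measurableSet_cell k).const_vadd _)]
  simp only [measure_vadd]
  rw [tsum_fintype]
  simp [Finset.sum_const, Finset.card_univ, nsmul_eq_mul]

lemma vol_update (k : Fin 4 → ℤ) (i : Fin 4) (d : ℤ) :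
    haarQn p 4 (cell p (Function.update k i (k i + d)))
      = (p:ℝ≥0∞) ^ d * haarQn p 4 (cell p k) := by
  have hpe0 : (p:ℝ≥0∞) ≠ 0 := Nat.cast_ne_zero.mpr (Fact.out : p.Prime).ne_zero
  have hpet : (p:ℝ≥0∞) ≠ ⊤ := ENNReal.natCast_ne_top p
  induction d using Int.induction_on with
  | zero => simp [Function.update_eq_self]
  | succ d ih =>
      have h := vol_succ (p := p) (Function.update k i (k i + d)) i
      rw [Function.update_idem, Function.update_self] at h
      rw [show k i + (d+1) = k i + d + 1 by ring, h, ih, ← mul_assoc,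
        ENNReal.zpow_add hpe0 hpet d 1, zpow_one]
      ring
  | pred d ih =>
      have h := vol_succ (p := p) (Function.update k i (k i + (-(d:ℤ)-1))) i
      rw [Function.update_idem, Function.update_self,
        show k i + (-(d:ℤ)-1) + 1 = k i + -(d:ℤ) by ring] at h
      have e : (p:ℝ≥0∞) ^ (-(d:ℤ)) = (p:ℝ≥0∞) ^ (-(d:ℤ)-1) * (p:ℝ≥0∞) := by
        calc (p:ℝ≥0∞) ^ (-(d:ℤ)) = (p:ℝ≥0∞) ^ ((-(d:ℤ)-1)+1) := by ring_nf
          _ = (p:ℝ≥0∞) ^ (-(d:ℤ)-1) * (p:ℝ≥0∞) ^ (1:ℤ) := ENNReal.zpow_add hpe0 hpet _ _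
          _ = (p:ℝ≥0∞) ^ (-(d:ℤ)-1) * (p:ℝ≥0∞) := by rw [zpow_one]
      have hmul : (p:ℝ≥0∞) * haarQn p 4 (cell p (Function.update k i (k i + (-(d:ℤ)-1))))
          = (p:ℝ≥0∞) * ((p:ℝ≥0∞) ^ (-(d:ℤ)-1) * haarQn p 4 (cell p k)) := by
        rw [← h, ih, e]; ring
      exact (ENNReal.mul_right_inj hpe0 hpet).mp hmul

lemma vol_cell (k : Fin 4 → ℤ) :
    haarQn p 4 (cell p k) = (p:ℝ≥0∞) ^ (k 0 + k 1 + k 2 + k 3) := by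
  have hpe0 : (p:ℝ≥0∞) ≠ 0 := Nat.cast_ne_zero.mpr (Fact.out : p.Prime).ne_zero
  have hpet : (p:ℝ≥0∞) ≠ ⊤ := ENNReal.natCast_ne_top p
  have step : ∀ (g : Fin 4 → ℤ) (i : Fin 4), g i = 0 → ∀ m : ℤ,
      haarQn p 4 (cell p (Function.update g i m)) = (p:ℝ≥0∞) ^ m * haarQn p 4 (cell p g) := by
    intro g i hgi m
    have := vol_update (p := p) g i m
    rwa [hgi, zero_add] at this
  have e0 : haarQn p 4 (cell p (fun _ => (0:ℤ))) = 1 := by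
    have hcell : cell p (fun _ => (0:ℤ)) = Metric.closedBall (0 : Fin 4 → ℚ_[p]) 1 := by
      ext x
      simp only [cell, Set.mem_setOf_eq, Metric.mem_closedBall, dist_zero_right, zpow_zero]
      rw [pi_norm_le_iff_of_nonneg zero_le_one]
    rw [hcell]
    exact Measure.addHaarMeasure_self
  set g0 : Fin 4 → ℤ := fun _ => 0 with hg0
  set g1 := Function.update g0 0 (k 0) with hg1
  set g2 := Function.update g1 1 (k 1) with hg2
  set g3 := Function.update g2 2 (k 2) with hg3
  have hgk : Function.update g3 3 (k 3) = k := by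
    funext i
    fin_cases i <;> simp [hg3, hg2, hg1, hg0, Function.update]
  have e1 := step g0 0 rfl (k 0)
  have e2 := step g1 1 (by simp [hg1, hg0, Function.update]) (k 1)
  have e3 := step g2 2 (by simp [hg2, hg1, hg0, Function.update]) (k 2)
  have e4 := step g3 3 (by simp [hg3, hg2, hg1, hg0, Function.update]) (k 3)
  rw [hgk] at e4
  rw [e4, e3, e2, e1, e0, mul_one]
  rw [← ENNReal.zpow_add hpe0 hpet, ← ENNReal.zpow_add hpe0 hpet, ← ENNReal.zpow_add hpe0 hpet]
  ring_nf

lemma toReal_zpowp (j : ℤ) : ((p:ℝ≥0∞) ^ j).toReal = (p:ℝ) ^ j := by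
  rcases j with n | n
  · simp [ENNReal.toReal_pow]
  · simp [zpow_negSucc, ENNReal.toReal_pow]

lemma zpowp_ne_top (j : ℤ) : (p:ℝ≥0∞) ^ j ≠ ⊤ := by
  have hpe0 : (p:ℝ≥0∞) ≠ 0 := Nat.cast_ne_zero.mpr (Fact.out : p.Prime).ne_zero
  rcases j with n | n
  · simp [ENNReal.pow_ne_top, ENNReal.natCast_ne_top]
  · simp only [zpow_negSucc, ne_eq, ENNReal.inv_eq_top]
    exact pow_ne_zero _ hpe0

lemma norm_a_eq_one {a : ℤ} (ha : legendreSym p a = -1) : ‖(a : ℚ_[p])‖ = 1 := by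
  have hdvd : ¬ ((p:ℤ) ∣ a) := by
    intro hdv
    have h0 : ((a : ZMod p)) = 0 := (ZMod.intCast_zmod_eq_zero_iff_dvd _ p).2 hdv
    have := (legendreSym.eq_zero_iff p a).2 h0
    omega
  have hle : ‖(a : ℚ_[p])‖ ≤ 1 := Padic.norm_int_le_one _
  rcases lt_or_eq_of_le hle with hlt | heq
  · exact absurd ((Padic.norm_intCast_lt_one_iff (k := _)).1 hlt) hdvd
  · exact heq

lemma norm_sq_sub_a {a : ℤ} (ha : legendreSym p a = -1) {w : ℚ_[p]} (hw : ‖w‖ = 1) :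
    ‖w ^ 2 - (a : ℚ_[p])‖ = 1 := by
  have haz : ((a : ZMod p)) ≠ 0 := by
    intro h0
    have := (legendreSym.eq_zero_iff p a).2 h0
    omega
  have hle : ‖w ^ 2 - (a : ℚ_[p])‖ ≤ 1 := by
    have := Padic.nonarchimedean (w ^ 2) (-(a : ℚ_[p]))
    simp only [← sub_eq_add_neg, norm_neg] at this
    refine le_trans this (max_le ?_ (Padic.norm_int_le_one _))
    rw [norm_pow, hw]; norm_num
  rcases lt_or_eq_of_le hle with hlt | heq
  · exfalso
    set W : ℤ_[p] := ⟨w, le_of_eq hw⟩ with hW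
    have hcoe : ((W ^ 2 - (a : ℤ_[p]) : ℤ_[p]) : ℚ_[p]) = w ^ 2 - (a : ℚ_[p]) := by
      rfl
    have hlt' : ‖(W ^ 2 - (a : ℤ_[p]) : ℤ_[p])‖ < 1 := by
      show ‖((W ^ 2 - (a : ℤ_[p]) : ℤ_[p]) : ℚ_[p])‖ < 1
      rwa [hcoe]
    have hdv : (p : ℤ_[p]) ∣ (W ^ 2 - (a : ℤ_[p])) := (PadicInt.norm_lt_one_iff_dvd _).1 hlt'
    have hmap : (PadicInt.toZMod W) ^ 2 = ((a : ZMod p)) := by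
      obtain ⟨c, hc⟩ := hdv
      have := congrArg PadicInt.toZMod hc
      rw [map_sub, map_mul, map_pow, map_intCast, map_natCast] at this
      rw [ZMod.natCast_self, zero_mul] at this
      exact sub_eq_zero.mp this
    have hsq : IsSquare ((a : ZMod p)) := ⟨PadicInt.toZMod W, by rw [← hmap]; ring⟩
    have := (legendreSym.eq_one_iff p haz).2 hsq
    omega
  · exact heq

lemma norm_binary {a : ℤ} (ha : legendreSym p a = -1) (u v : ℚ_[p]) :
    ‖u ^ 2 - (a : ℚ_[p]) * v ^ 2‖ = (max ‖u‖ ‖v‖) ^ 2 := by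
  have hA := norm_a_eq_one ha
  by_cases hne : ‖u‖ = ‖v‖
  · by_cases hv : v = 0
    · have hu : u = 0 := by
        rw [hv, norm_zero] at hne
        exact norm_eq_zero.mp hne
      simp [hu, hv]
    · have hw : ‖u / v‖ = 1 := by
        rw [norm_div, hne, div_self (norm_ne_zero_iff.mpr hv)]
      have hfac : u ^ 2 - (a : ℚ_[p]) * v ^ 2 = ((u / v) ^ 2 - (a : ℚ_[p])) * v ^ 2 := by
        field_simp
      rw [hfac, norm_mul, norm_sq_sub_a ha hw, one_mul, norm_pow, hne]
      rw [max_self]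
  · have h1 : ‖u ^ 2‖ ≠ ‖-((a : ℚ_[p]) * v ^ 2)‖ := by
      rw [norm_neg, norm_mul, hA, one_mul, norm_pow, norm_pow]
      intro hcon
      exact hne (by nlinarith [norm_nonneg u, norm_nonneg v])
    have := Padic.add_eq_max_of_ne h1
    rw [← sub_eq_add_neg] at this
    rw [this, norm_neg, norm_mul, hA, one_mul, norm_pow, norm_pow]
    rcases le_total ‖u‖ ‖v‖ with h | h
    · rw [max_eq_right h, max_eq_right (by nlinarith [norm_nonneg u])]
    · rw [max_eq_left h, max_eq_left (by nlinarith [norm_nonneg v])]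

lemma norm_pin {y : ℚ_[p]} {m : ℤ} (h1 : (p:ℝ) ^ (m-1) < ‖y‖) (h2 : ‖y‖ ≤ (p:ℝ) ^ m) :
    ‖y‖ = (p:ℝ) ^ m := by
  have hy : y ≠ 0 := by
    intro h
    rw [h, norm_zero] at h1
    exact absurd h1 (not_lt.2 (by positivity))
  rw [Padic.norm_eq_zpow_neg_valuation hy] at h1 h2 ⊢
  congr 1
  have a1 : m - 1 < -y.valuation := (zpow_lt_zpow_iff_right₀ hp1R).mp h1
  have a2 : -y.valuation ≤ m := (zpow_le_zpow_iff_right₀ hp1R).mp h2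
  omega

def kU (n : ℤ) : Fin 4 → ℤ := fun _ => n
def kAB (n : ℤ) : Fin 4 → ℤ := fun i => if (i:ℕ) < 2 then n else n+1

lemma sq_zpow (m : ℤ) : ((p:ℝ) ^ m) ^ 2 = (p:ℝ) ^ (2*m) := by
  rw [← zpow_natCast ((p:ℝ) ^ m) 2, ← zpow_mul]
  ring_nf

lemma hQA {a : ℤ} (ha : legendreSym p a = -1) {n : ℤ} {x : Fin 4 → ℚ_[p]}
    (hx1 : x ∈ cell p (kU (n+1))) (hx2 : x ∉ cell p (kAB n)) :
    ‖Qf p a x‖ = (p:ℝ) ^ (2*n+2) := by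
  set m : ℤ := n + 1 with hm
  have hxle : ∀ i, ‖x i‖ ≤ (p:ℝ) ^ m := fun i => hx1 i
  obtain ⟨i, hi⟩ : ∃ i, ¬ ‖x i‖ ≤ (p:ℝ) ^ (kAB n i) := by
    by_contra hcon
    push_neg at hcon
    exact hx2 (fun i => hcon i)
  have hmax : max ‖x 0‖ ‖x 1‖ = (p:ℝ) ^ m := by
    fin_cases i
    · rw [not_le] at hi
      simp only [kAB, Fin.val_zero] at hi
      norm_num at hi
      have h0 : ‖x 0‖ = (p:ℝ) ^ m := norm_pin (by rw [show m - 1 = n by omega]; exact hi) (hxle 0)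
      rw [max_eq_left (by rw [h0]; exact hxle 1)]
      exact h0
    · rw [not_le] at hi
      simp only [kAB, Fin.val_one] at hi
      norm_num at hi
      have h1 : ‖x 1‖ = (p:ℝ) ^ m := norm_pin (by rw [show m - 1 = n by omega]; exact hi) (hxle 1)
      rw [max_eq_right (by rw [h1]; exact hxle 0)]
      exact h1
    · exact absurd (by simpa [kAB] using hxle 2) hi
    · exact absurd (by simpa [kAB] using hxle 3) hi
  have h01 : ‖x 0 ^ 2 - (a : ℚ_[p]) * x 1 ^ 2‖ = (p:ℝ) ^ (2*m) := by
    rw [norm_binary ha, hmax, sq_zpow]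
  have h23 : ‖-((p:ℚ_[p]) * (x 2 ^ 2 - (a : ℚ_[p]) * x 3 ^ 2))‖ ≤ (p:ℝ) ^ (2*m-1) := by
    rw [norm_neg, norm_mul, Padic.norm_p, norm_binary ha]
    have hb : (max ‖x 2‖ ‖x 3‖) ^ 2 ≤ (p:ℝ) ^ (2*m) := by
      rw [← sq_zpow]
      have : max ‖x 2‖ ‖x 3‖ ≤ (p:ℝ) ^ m := max_le (hxle 2) (hxle 3)
      nlinarith [norm_nonneg (x 2), norm_nonneg (x 3), le_max_left ‖x 2‖ ‖x 3‖,
        zpow_pos (hp0R (p := p)) m]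
    calc (p:ℝ)⁻¹ * (max ‖x 2‖ ‖x 3‖) ^ 2 ≤ (p:ℝ)⁻¹ * (p:ℝ) ^ (2*m) :=
          mul_le_mul_of_nonneg_left hb (by positivity)
      _ = (p:ℝ) ^ (2*m-1) := by
          rw [show (p:ℝ)⁻¹ = (p:ℝ) ^ (-1:ℤ) by simp, ← zpow_add₀ hp0R.ne']
          ring_nf
  have hQ : Qf p a x = (x 0 ^ 2 - (a : ℚ_[p]) * x 1 ^ 2)
      + (-((p:ℚ_[p]) * (x 2 ^ 2 - (a : ℚ_[p]) * x 3 ^ 2))) := by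
    simp only [Qf]; ring
  have hlt : (p:ℝ) ^ (2*m-1) < (p:ℝ) ^ (2*m) := zpow_lt_zpow_right₀ hp1R (by omega)
  have hne : ‖x 0 ^ 2 - (a : ℚ_[p]) * x 1 ^ 2‖
      ≠ ‖-((p:ℚ_[p]) * (x 2 ^ 2 - (a : ℚ_[p]) * x 3 ^ 2))‖ := by
    rw [h01]
    intro hcon
    rw [← hcon] at h23
    exact absurd h23 (not_le.2 hlt)
  rw [hQ, Padic.add_eq_max_of_ne hne, h01]
  rw [max_eq_left (le_trans h23 hlt.le), show 2*m = 2*n+2 by omega]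

lemma hQB {a : ℤ} (ha : legendreSym p a = -1) {n : ℤ} {x : Fin 4 → ℚ_[p]}
    (hx1 : x ∈ cell p (kAB n)) (hx2 : x ∉ cell p (kU n)) :
    ‖Qf p a x‖ = (p:ℝ) ^ (2*n+1) := by
  have hle01 : ‖x 0‖ ≤ (p:ℝ) ^ n := by simpa [kAB] using hx1 0
  have hle01' : ‖x 1‖ ≤ (p:ℝ) ^ n := by simpa [kAB] using hx1 1
  have hle23 : ‖x 2‖ ≤ (p:ℝ) ^ (n+1) := by simpa [kAB] using hx1 2
  have hle23' : ‖x 3‖ ≤ (p:ℝ) ^ (n+1) := by simpa [kAB] using hx1 3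
  obtain ⟨i, hi⟩ : ∃ i, ¬ ‖x i‖ ≤ (p:ℝ) ^ (kU n i) := by
    by_contra hcon
    push_neg at hcon
    exact hx2 (fun i => hcon i)
  have hmax : max ‖x 2‖ ‖x 3‖ = (p:ℝ) ^ (n+1) := by
    fin_cases i
    · exact absurd (by simpa [kU] using hle01) hi
    · exact absurd (by simpa [kU] using hle01') hi
    · rw [not_le] at hi
      simp only [kU] at hi
      have h2 : ‖x 2‖ = (p:ℝ) ^ (n+1) := norm_pin (by rw [show n+1-1 = n by omega]; exact hi) hle23
      rw [max_eq_left (by rw [h2]; exact hle23')]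
      exact h2
    · rw [not_le] at hi
      simp only [kU] at hi
      have h3 : ‖x 3‖ = (p:ℝ) ^ (n+1) := norm_pin (by rw [show n+1-1 = n by omega]; exact hi) hle23'
      rw [max_eq_right (by rw [h3]; exact hle23)]
      exact h3
  have h23 : ‖-((p:ℚ_[p]) * (x 2 ^ 2 - (a : ℚ_[p]) * x 3 ^ 2))‖ = (p:ℝ) ^ (2*n+1) := by
    rw [norm_neg, norm_mul, Padic.norm_p, norm_binary ha, hmax, sq_zpow]
    rw [show (p:ℝ)⁻¹ = (p:ℝ) ^ (-1:ℤ) by simp, ← zpow_add₀ hp0R.ne']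
    ring_nf
  have h01 : ‖x 0 ^ 2 - (a : ℚ_[p]) * x 1 ^ 2‖ ≤ (p:ℝ) ^ (2*n) := by
    rw [norm_binary ha, ← sq_zpow]
    have hmx : max ‖x 0‖ ‖x 1‖ ≤ (p:ℝ) ^ n := max_le hle01 hle01'
    nlinarith [norm_nonneg (x 0), norm_nonneg (x 1), le_max_left ‖x 0‖ ‖x 1‖,
      zpow_pos (hp0R (p := p)) n]
  have hQ : Qf p a x = (x 0 ^ 2 - (a : ℚ_[p]) * x 1 ^ 2)
      + (-((p:ℚ_[p]) * (x 2 ^ 2 - (a : ℚ_[p]) * x 3 ^ 2))) := by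
    simp only [Qf]; ring
  have hlt : (p:ℝ) ^ (2*n) < (p:ℝ) ^ (2*n+1) := zpow_lt_zpow_right₀ hp1R (by omega)
  have hne : ‖x 0 ^ 2 - (a : ℚ_[p]) * x 1 ^ 2‖
      ≠ ‖-((p:ℚ_[p]) * (x 2 ^ 2 - (a : ℚ_[p]) * x 3 ^ 2))‖ := by
    rw [h23]
    intro hcon
    rw [hcon] at h01
    exact absurd h01 (not_le.2 hlt)
  rw [hQ, Padic.add_eq_max_of_ne hne, h23]
  exact max_eq_right (le_trans h01 hlt.le)

lemma ofReal_zpowp (j : ℤ) : ENNReal.ofReal ((p:ℝ) ^ j) = (p:ℝ≥0∞) ^ j := by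
  rw [← toReal_zpowp]
  exact ENNReal.ofReal_toReal (zpowp_ne_top j)

/-- For `Re α > 0`,
`∫_{‖x‖ > 1} |f(x)|_p^{-α-2} d⁴x = p^{-2α}(1 - p^{-2})(1 + p^{α})/(1 - p^{-2α})`. -/
theorem integral_outside_unit_ball (p : ℕ) [Fact p.Prime] (hp : p ≠ 2)
    (a : ℤ) (ha : legendreSym p a = -1) (α : ℂ) (hα : 0 < α.re) :
    ∫ x in {x : Fin 4 → ℚ_[p] | 1 < ‖x‖}, ((‖Qf p a x‖ : ℂ) ^ (-α - 2)) ∂haarQn p 4 =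
      (p : ℂ) ^ (-2 * α) * (1 - (p : ℂ) ^ (-(2 : ℂ))) * (1 + (p : ℂ) ^ α) /
        (1 - (p : ℂ) ^ (-2 * α)) := by
  classical
  have hq1 : (1:ℝ) < (p:ℝ) := hp1R
  have hq0 : (0:ℝ) < (p:ℝ) := hp0R
  have hP0 : (p:ℂ) ≠ 0 := Nat.cast_ne_zero.mpr (Fact.out : p.Prime).ne_zero
  have hpe0 : (p:ℝ≥0∞) ≠ 0 := Nat.cast_ne_zero.mpr (Fact.out : p.Prime).ne_zero
  have hpe1 : (1:ℝ≥0∞) ≤ (p:ℝ≥0∞) := by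
    exact_mod_cast Nat.one_le_cast.mpr (Fact.out : p.Prime).one_lt.le
  set μ : Measure (Fin 4 → ℚ_[p]) := haarQn p 4 with hμdef
  set F : (Fin 4 → ℚ_[p]) → ℂ := fun x => ((‖Qf p a x‖ : ℂ) ^ (-α - 2)) with hFdef
  set S : ℕ → Set (Fin 4 → ℚ_[p]) :=
    fun n => cell p (kU ((n:ℤ)+1)) \ cell p (kU (n:ℤ)) with hSdef
  set A : ℕ → Set (Fin 4 → ℚ_[p]) :=
    fun n => cell p (kU ((n:ℤ)+1)) \ cell p (kAB (n:ℤ)) with hAdef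
  set B : ℕ → Set (Fin 4 → ℚ_[p]) :=
    fun n => cell p (kAB (n:ℤ)) \ cell p (kU (n:ℤ)) with hBdef
  have hsub1 : ∀ n : ℕ, cell p (kU (n:ℤ)) ⊆ cell p (kAB (n:ℤ)) :=
    fun n => cell_mono (fun i => by simp only [kU, kAB]; split <;> omega)
  have hsub2 : ∀ n : ℕ, cell p (kAB (n:ℤ)) ⊆ cell p (kU ((n:ℤ)+1)) :=
    fun n => cell_mono (fun i => by simp only [kU, kAB]; split <;> omega)
  have hSAB : ∀ n, S n = A n ∪ B n :=
    fun n => (Set.diff_union_diff_cancel (hsub2 n) (hsub1 n)).symm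
  have hmeasS : ∀ n, MeasurableSet (S n) :=
    fun n => (measurableSet_cell _).diff (measurableSet_cell _)
  have hmeasA : ∀ n, MeasurableSet (A n) :=
    fun n => (measurableSet_cell _).diff (measurableSet_cell _)
  have hmeasB : ∀ n, MeasurableSet (B n) :=
    fun n => (measurableSet_cell _).diff (measurableSet_cell _)
  have hdisjS : Pairwise (Function.onFun Disjoint S) := by
    have hD : ∀ m n : ℕ, m < n → Disjoint (S m) (S n) := by
      intro m n hmn
      rw [Set.disjoint_left]
      intro x hxm hxn
      exact hxn.2 (cell_mono (fun i => by simp only [kU]; omega) hxm.1)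
    intro m n hmn
    rcases lt_or_gt_of_ne hmn with h | h
    · exact hD m n h
    · exact (hD n m h).symm
  have hdisjAB : ∀ n, Disjoint (A n) (B n) :=
    fun n => Set.disjoint_left.mpr (fun x hxA hxB => hxA.2 hxB.1)
  -- the covering
  have hcover : {x : Fin 4 → ℚ_[p] | 1 < ‖x‖} = ⋃ n, S n := by
    ext x
    simp only [Set.mem_setOf_eq, Set.mem_iUnion]
    constructor
    · intro hx
      obtain ⟨N, hN⟩ := pow_unbounded_of_one_lt ‖x‖ hq1
      have hQex : ∃ N : ℕ, ‖x‖ ≤ (p:ℝ) ^ N := ⟨N, hN.le⟩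
      have hspec : ‖x‖ ≤ (p:ℝ) ^ (Nat.find hQex) := Nat.find_spec hQex
      have hn0 : Nat.find hQex ≠ 0 := by
        intro h0
        rw [h0, pow_zero] at hspec; linarith
      obtain ⟨m, hm⟩ := Nat.exists_eq_succ_of_ne_zero hn0
      refine ⟨m, fun i => ?_, fun hmem => ?_⟩
      · have h1 : ‖x i‖ ≤ ‖x‖ := norm_le_pi_norm x i
        have h2 : ‖x‖ ≤ (p:ℝ) ^ ((m:ℤ)+1) := by
          rw [hm] at hspec
          rw [show ((m:ℤ)+1) = ((m+1:ℕ):ℤ) by push_cast; ring, zpow_natCast]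
          exact hspec
        simp only [kU]
        linarith
      · have hxle : ‖x‖ ≤ (p:ℝ) ^ m := by
          rw [← zpow_natCast, pi_norm_le_iff_of_nonneg (by positivity)]
          intro i
          exact hmem i
        exact Nat.find_min hQex (by omega) hxle
    · rintro ⟨n, hn⟩
      obtain ⟨i, hi⟩ : ∃ i, ¬ ‖x i‖ ≤ (p:ℝ) ^ (kU (n:ℤ) i) := by
        by_contra hcon
        push_neg at hcon
        exact hn.2 (fun i => hcon i)
      rw [not_le] at hi
      have h1 : (1:ℝ) ≤ (p:ℝ) ^ (kU (n:ℤ) i) := by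
        simp only [kU]
        calc (1:ℝ) = (p:ℝ) ^ (0:ℤ) := (zpow_zero _).symm
          _ ≤ (p:ℝ) ^ (n:ℤ) := zpow_le_zpow_right₀ hq1.le (by positivity)
      exact lt_of_lt_of_le (lt_of_le_of_lt h1 hi) (norm_le_pi_norm x i)
  -- exponent sums
  have hkU : ∀ m : ℤ, kU m 0 + kU m 1 + kU m 2 + kU m 3 = 4*m := by
    intro m; simp only [kU]; ring
  have hkAB : ∀ m : ℤ, kAB m 0 + kAB m 1 + kAB m 2 + kAB m 3 = 4*m+2 := by
    intro m
    show m + m + (m+1) + (m+1) = 4*m+2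
    ring
  -- measures of the pieces
  have hμA : ∀ n : ℕ, μ (A n) = (p:ℝ≥0∞) ^ (4*(n:ℤ)+4) - (p:ℝ≥0∞) ^ (4*(n:ℤ)+2) := by
    intro n
    rw [hAdef]
    rw [measure_diff (hsub2 n) (measurableSet_cell _).nullMeasurableSet (vol_cell_lt_top _).ne,
      vol_cell, vol_cell, hkU, hkAB]
    congr 1 <;> ring
  have hμB : ∀ n : ℕ, μ (B n) = (p:ℝ≥0∞) ^ (4*(n:ℤ)+2) - (p:ℝ≥0∞) ^ (4*(n:ℤ)) := by
    intro n
    rw [hBdef]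
    rw [measure_diff (hsub1 n) (measurableSet_cell _).nullMeasurableSet (vol_cell_lt_top _).ne,
      vol_cell, vol_cell, hkU, hkAB]
  have htRA : ∀ n : ℕ, (μ (A n)).toReal = (p:ℝ) ^ (4*n+4) - (p:ℝ) ^ (4*n+2) := by
    intro n
    rw [hμA n, ENNReal.toReal_sub_of_le (ENNReal.zpow_le_of_le hpe1 (by omega)) (zpowp_ne_top _),
      toReal_zpowp, toReal_zpowp,
      show (4*(n:ℤ)+4) = ((4*n+4:ℕ):ℤ) by push_cast; ring, zpow_natCast,
      show (4*(n:ℤ)+2) = ((4*n+2:ℕ):ℤ) by push_cast; ring, zpow_natCast]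
  have htRB : ∀ n : ℕ, (μ (B n)).toReal = (p:ℝ) ^ (4*n+2) - (p:ℝ) ^ (4*n) := by
    intro n
    rw [hμB n, ENNReal.toReal_sub_of_le (ENNReal.zpow_le_of_le hpe1 (by omega)) (zpowp_ne_top _),
      toReal_zpowp, toReal_zpowp,
      show (4*(n:ℤ)+2) = ((4*n+2:ℕ):ℤ) by push_cast; ring, zpow_natCast,
      show (4*(n:ℤ)) = ((4*n:ℕ):ℤ) by push_cast; ring, zpow_natCast]
  -- cpow helper
  have hcpow : ∀ (k : ℕ) (w : ℂ), (((p:ℝ) ^ k : ℝ) : ℂ) ^ w = ((p:ℂ) ^ w) ^ k := by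
    intro k w
    induction k with
    | zero => simp
    | succ k ih =>
        have hsplit : (((p:ℝ) ^ (k+1) : ℝ) : ℂ) ^ w
            = (((p:ℝ) ^ k : ℝ) : ℂ) ^ w * (((p:ℝ) : ℝ) : ℂ) ^ w := by
          rw [pow_succ, Complex.ofReal_mul]
          exact Complex.mul_cpow_ofReal_nonneg (by positivity) hq0.le w
        rw [hsplit, ih, pow_succ]
        congr 2 <;> push_cast <;> ring
  set y : ℂ := (p:ℂ) ^ (-α - 2) with hydef
  -- value of F on the pieces
  have hFA : ∀ n : ℕ, Set.EqOn F (fun _ => (y ^ (2*n+2) : ℂ)) (A n) := by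
    intro n x hx
    show (((‖Qf p a x‖ : ℝ) : ℂ)) ^ (-α - 2) = y ^ (2*n+2)
    rw [hQA ha hx.1 hx.2,
      show (2*(n:ℤ)+2) = ((2*n+2:ℕ):ℤ) by push_cast; ring, zpow_natCast]
    exact hcpow (2*n+2) (-α-2)
  have hFB : ∀ n : ℕ, Set.EqOn F (fun _ => (y ^ (2*n+1) : ℂ)) (B n) := by
    intro n x hx
    show (((‖Qf p a x‖ : ℝ) : ℂ)) ^ (-α - 2) = y ^ (2*n+1)
    rw [hQB ha hx.1 hx.2,
      show (2*(n:ℤ)+1) = ((2*n+1:ℕ):ℤ) by push_cast; ring, zpow_natCast]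
    exact hcpow (2*n+1) (-α-2)
  -- measurability of F
  have hQfc : Continuous fun x => Qf p a x := by
    unfold Qf
    fun_prop
  have hFmeas : Measurable F := by
    apply Measurable.pow _ measurable_const
    exact Complex.measurable_ofReal.comp (continuous_norm.comp hQfc).measurable
  -- norm of F on the pieces
  have hFnorm : ∀ (x : Fin 4 → ℚ_[p]) (j : ℤ), ‖Qf p a x‖ = (p:ℝ) ^ j →
      ‖F x‖ = ((p:ℝ) ^ j) ^ (-α.re - 2) := by
    intro x j hj
    show ‖(((‖Qf p a x‖ : ℝ) : ℂ)) ^ (-α - 2)‖ = _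
    rw [hj, Complex.norm_cpow_eq_rpow_re_of_pos (by positivity)]
    congr 1 <;> simp
  -- integrability
  have hIntS : ∫⁻ x in ⋃ n, S n, ENNReal.ofReal ‖F x‖ ∂μ < ⊤ := by
    rw [lintegral_iUnion hmeasS hdisjS]
    have hFbound : ∀ n : ℕ, ∀ x ∈ S n,
        ENNReal.ofReal ‖F x‖ ≤ ENNReal.ofReal (((p:ℝ) ^ (2*(n:ℤ)+1)) ^ (-α.re-2)) := by
      intro n x hx
      apply ENNReal.ofReal_le_ofReal
      have hxAB := (hSAB n) ▸ hx
      rcases hxAB with hA' | hB'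
      · rw [hFnorm x (2*(n:ℤ)+2) (hQA ha hA'.1 hA'.2)]
        exact Real.rpow_le_rpow_of_nonpos (by positivity)
          (zpow_le_zpow_right₀ hq1.le (by omega)) (by linarith)
      · rw [hFnorm x (2*(n:ℤ)+1) (hQB ha hB'.1 hB'.2)]
    have hterm : ∀ n : ℕ, ∫⁻ x in S n, ENNReal.ofReal ‖F x‖ ∂μ ≤
        ENNReal.ofReal ((p:ℝ) ^ ((2:ℝ) - α.re)) * (ENNReal.ofReal ((p:ℝ) ^ ((-2:ℝ) * α.re))) ^ n := by
      intro n
      have h1 : ∫⁻ x in S n, ENNReal.ofReal ‖F x‖ ∂μ ≤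
          ∫⁻ _ in S n, ENNReal.ofReal (((p:ℝ) ^ (2*(n:ℤ)+1)) ^ (-α.re-2)) ∂μ :=
        setLIntegral_mono measurable_const (hFbound n)
      rw [setLIntegral_const] at h1
      have h2 : μ (S n) ≤ (p:ℝ≥0∞) ^ (4*(n:ℤ)+4) := by
        refine le_trans (measure_mono Set.diff_subset) (le_of_eq ?_)
        rw [vol_cell, hkU]
        congr 1 <;> ring
      calc ∫⁻ x in S n, ENNReal.ofReal ‖F x‖ ∂μ
          ≤ ENNReal.ofReal (((p:ℝ) ^ (2*(n:ℤ)+1)) ^ (-α.re-2)) * μ (S n) := h1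
        _ ≤ ENNReal.ofReal (((p:ℝ) ^ (2*(n:ℤ)+1)) ^ (-α.re-2)) * (p:ℝ≥0∞) ^ (4*(n:ℤ)+4) :=
            mul_le_mul_right h2 _
        _ = ENNReal.ofReal ((p:ℝ) ^ ((2:ℝ) - α.re)) * (ENNReal.ofReal ((p:ℝ) ^ ((-2:ℝ) * α.re))) ^ n := by
            rw [← ofReal_zpowp (4*(n:ℤ)+4), ← ENNReal.ofReal_mul (by positivity),
              ← ENNReal.ofReal_pow (by positivity), ← ENNReal.ofReal_mul (by positivity)]
            congr 1
            rw [← Real.rpow_intCast (p:ℝ) (2*(n:ℤ)+1), ← Real.rpow_intCast (p:ℝ) (4*(n:ℤ)+4),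
              ← Real.rpow_mul hq0.le, ← Real.rpow_add hq0,
              ← Real.rpow_natCast ((p:ℝ) ^ ((-2:ℝ) * α.re)) n, ← Real.rpow_mul hq0.le,
              ← Real.rpow_add hq0]
            congr 1
            push_cast
            ring
    refine lt_of_le_of_lt (ENNReal.tsum_le_tsum hterm) ?_
    rw [ENNReal.tsum_mul_left, ENNReal.tsum_geometric]
    have hrlt : ENNReal.ofReal ((p:ℝ) ^ ((-2:ℝ) * α.re)) < 1 := by
      rw [show (1:ℝ≥0∞) = ENNReal.ofReal 1 by simp]
      exact (ENNReal.ofReal_lt_ofReal_iff one_pos).mpr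
        (Real.rpow_lt_one_of_one_lt_of_neg hq1 (by nlinarith))
    apply ENNReal.mul_lt_top ENNReal.ofReal_lt_top
    rw [ENNReal.inv_lt_top]
    exact tsub_pos_of_lt hrlt
  have hInt : IntegrableOn F (⋃ n, S n) μ := by
    constructor
    · exact hFmeas.aestronglyMeasurable
    · rw [hasFiniteIntegral_iff_norm]
      exact hIntS
  -- evaluate each integral
  have hval : ∀ n : ℕ, ∫ x in S n, F x ∂μ =
      ((p:ℂ) ^ 4 * y ^ 2) ^ n * (((p:ℂ) ^ 2 - 1) * ((p:ℂ) ^ 2 * y ^ 2 + y)) := by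
    intro n
    rw [hSAB n, setIntegral_union (hdisjAB n) (hmeasB n)
      (hInt.mono_set ((Set.subset_union_left).trans ((hSAB n).symm.le.trans (Set.subset_iUnion S n))))
      (hInt.mono_set ((Set.subset_union_right).trans ((hSAB n).symm.le.trans (Set.subset_iUnion S n)))),
      setIntegral_congr_fun (hmeasA n) (hFA n), setIntegral_congr_fun (hmeasB n) (hFB n),
      setIntegral_const, setIntegral_const, measureReal_def, measureReal_def, htRA n, htRB n,
      Complex.real_smul, Complex.real_smul]
    push_cast
    ring
  -- geometric sum
  have hynorm : ‖y‖ = (p:ℝ) ^ (-α.re - 2) := by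
    rw [hydef, show ((p:ℕ):ℂ) = (((p:ℝ):ℝ):ℂ) by push_cast; rfl, 
      Complex.norm_cpow_eq_rpow_re_of_pos hq0]
    congr 1 <;> simp
  have hGlt : ‖(p:ℂ) ^ 4 * y ^ 2‖ < 1 := by
    rw [norm_mul, norm_pow, norm_pow, hynorm, Complex.norm_natCast]
    have hcalc : (p:ℝ) ^ (4:ℕ) * ((p:ℝ) ^ (-α.re - 2)) ^ (2:ℕ) = (p:ℝ) ^ ((-2:ℝ) * α.re) := by
      rw [← Real.rpow_natCast (p:ℝ) 4, ← Real.rpow_natCast ((p:ℝ) ^ (-α.re - 2)) 2,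
        ← Real.rpow_mul hq0.le, ← Real.rpow_add hq0]
      congr 1
      push_cast
      ring
    rw [hcalc]
    exact Real.rpow_lt_one_of_one_lt_of_neg hq1 (by nlinarith)
  -- main rewrite
  rw [hcover, integral_iUnion hmeasS hdisjS hInt]
  rw [tsum_congr hval, tsum_mul_right, tsum_geometric_of_norm_lt_one hGlt]
  -- final algebra
  set u : ℂ := (p:ℂ) ^ (-α) with hudef
  have hy_eq : y = u * ((p:ℂ) ^ 2)⁻¹ := by
    rw [hydef, hudef, show (-α - 2 : ℂ) = (-α) + (-2) by ring, Complex.cpow_add _ _ hP0]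
    congr 1
    rw [show ((-2):ℂ) = ((-2:ℤ):ℂ) by norm_num, Complex.cpow_intCast]
    rw [zpow_neg]
    norm_cast
  have hmulu : u * (p:ℂ) ^ α = 1 := by
    rw [hudef, ← Complex.cpow_add _ _ hP0]
    simp
  have hu0 : u ≠ 0 := left_ne_zero_of_mul_eq_one hmulu
  have hPα : (p:ℂ) ^ α = u⁻¹ := eq_inv_of_mul_eq_one_right hmulu
  have hP2α : (p:ℂ) ^ (-2*α) = u ^ 2 := by
    rw [show (-2*α : ℂ) = (-α) + (-α) by ring, Complex.cpow_add _ _ hP0, hudef]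
    ring
  have hPm2 : (p:ℂ) ^ (-(2:ℂ)) = ((p:ℂ) ^ 2)⁻¹ := by
    rw [show (-(2:ℂ)) = ((-2:ℤ):ℂ) by norm_num, Complex.cpow_intCast, zpow_neg]
    norm_cast
  have hP2ne : ((p:ℂ) ^ 2 : ℂ) ≠ 0 := pow_ne_zero _ hP0
  have hGy : (p:ℂ) ^ 4 * y ^ 2 = u ^ 2 := by
    rw [hy_eq]
    field_simp
  have h1u : (1:ℂ) - u ^ 2 ≠ 0 := by
    intro hc
    rw [sub_eq_zero] at hc
    rw [hGy, ← hc, norm_one] at hGlt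
    exact lt_irrefl _ hGlt
  rw [hGy, hP2α, hPm2, hPα, hy_eq]
  field_simp
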